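/- arXiv:1911.10537 — 5 statements merged into one kernel-verified Lean document; each statement's English description precedes it below -/
import Mathlib

section
/- Let A be an associative unital algebra with elements s₁, s₃, d satisfying s₁² = 1, s₃² = 1, d² = δd, d s₁ d = d, d s₃ d = d, s₁ s₃ = s₃ s₁, d s₃ s₁ d s₁ = d s₃ s₁ d s₃, and s₁ d s₃ s₁ d = s₃ d s₃ s₁ d, where δ is a scalar with δ ≠ 0 and δ ≠ 1. Then the element E = (1/(2δ(δ-1)))·(1-s₁)·d s₁ s₃ d·(1-s₁) is an idempotent: E² = E. -/
/-- In an associative unital ℂ-algebra with elements s₁, s₃, d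
satisfying the walled Brauer relations of B_{2,2}(δ), with δ ≠ 0, δ ≠ 1,
the element E = (1/(2δ(δ-1)))·(1-s₁)·d s₁ s₃ d·(1-s₁) is an idempotent. -/
theorem fusion_idempotent_B22 {A : Type*} [Ring A] [Algebra ℂ A]
    (s₁ s₃ d : A) (δ : ℂ) (hδ0 : δ ≠ 0) (hδ1 : δ ≠ 1)
    (h1 : s₁ * s₁ = 1) (h3 : s₃ * s₃ = 1) (hd : d * d = δ • d)
    (hds1d : d * s₁ * d = d) (hds3d : d * s₃ * d = d)
    (hcomm : s₁ * s₃ = s₃ * s₁)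
    (hmix1 : d * s₃ * s₁ * d * s₁ = d * s₃ * s₁ * d * s₃)
    (hmix2 : s₁ * d * s₃ * s₁ * d = s₃ * d * s₃ * s₁ * d) :
    ((2 * δ * (δ - 1))⁻¹ • ((1 - s₁) * (d * s₁ * s₃ * d) * (1 - s₁))) *
      ((2 * δ * (δ - 1))⁻¹ • ((1 - s₁) * (d * s₁ * s₃ * d) * (1 - s₁))) =
      (2 * δ * (δ - 1))⁻¹ • ((1 - s₁) * (d * s₁ * s₃ * d) * (1 - s₁)) := by
  set D : A := d * s₁ * s₃ * d with hDdef
  -- helper rewriting lemmas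
  have hcd : d * s₁ * s₃ = d * s₃ * s₁ := by
    rw [mul_assoc, hcomm, ← mul_assoc]
  have hA : d * s₁ * s₃ * d * s₁ = d * s₁ * s₃ * d * s₃ := by
    rw [hcd]; exact hmix1
  have h33 : ∀ x : A, x * s₃ * s₃ = x := fun x => by
    rw [mul_assoc, h3, mul_one]
  have H3 : ∀ x : A, x * d * s₃ * d = x * d := fun x => by
    rw [mul_assoc x d s₃, mul_assoc x, hds3d]
  have Hdd : ∀ x : A, x * d * d = δ • (x * d) := fun x => by
    rw [mul_assoc, hd, mul_smul_comm]
  -- D * D = δ² D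
  have hDD : D * D = (δ * δ) • D := by
    have e1 : D * D = d * s₁ * s₃ * (d * d) * s₁ * s₃ * d := by
      rw [hDdef]; simp only [mul_assoc]
    rw [e1, hd]
    simp only [mul_smul_comm, smul_mul_assoc]
    rw [hA, h33, Hdd, smul_smul, ← hDdef]
  -- D * s₁ * D = δ D
  have hDsD : D * s₁ * D = δ • D := by
    have e1 : D * s₁ * D = d * s₁ * s₃ * d * s₃ * d * s₁ * s₃ * d := by
      rw [hDdef, hA]; simp only [mul_assoc]
    rw [e1, H3 (d * s₁ * s₃), hA, h33, Hdd, ← hDdef]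
  -- the middle contraction
  have hmid : D * (1 - s₁) * D = (δ * δ - δ) • D := by
    rw [mul_sub, mul_one, sub_mul, hDD, hDsD, ← sub_smul]
  -- (1 - s₁)² = 2 (1 - s₁)
  have hsq : (1 - s₁) * (1 - s₁) = (2 : ℂ) • (1 - s₁) := by
    simp only [sub_mul, mul_sub, mul_one, one_mul, h1, two_smul]
    abel
  -- the key identity X * X = 2δ(δ-1) X
  have key : ((1 - s₁) * D * (1 - s₁)) * ((1 - s₁) * D * (1 - s₁)) =
      (2 * δ * (δ - 1)) • ((1 - s₁) * D * (1 - s₁)) := by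
    calc ((1 - s₁) * D * (1 - s₁)) * ((1 - s₁) * D * (1 - s₁))
        = (1 - s₁) * (D * ((1 - s₁) * (1 - s₁)) * D) * (1 - s₁) := by
          simp only [mul_assoc]
      _ = (1 - s₁) * (D * ((2 : ℂ) • (1 - s₁)) * D) * (1 - s₁) := by rw [hsq]
      _ = (2 : ℂ) • ((1 - s₁) * (D * (1 - s₁) * D) * (1 - s₁)) := by
          simp only [mul_smul_comm, smul_mul_assoc]
      _ = (2 : ℂ) • ((1 - s₁) * ((δ * δ - δ) • D) * (1 - s₁)) := by rw [hmid]
      _ = (2 * (δ * δ - δ)) • ((1 - s₁) * D * (1 - s₁)) := by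
          simp only [mul_smul_comm, smul_mul_assoc, smul_smul]
      _ = (2 * δ * (δ - 1)) • ((1 - s₁) * D * (1 - s₁)) := by ring_nf
  have hc : (2 * δ * (δ - 1)) ≠ 0 := by
    have : δ - 1 ≠ 0 := sub_ne_zero.mpr hδ1
    exact mul_ne_zero (mul_ne_zero two_ne_zero hδ0) this
  rw [smul_mul_smul_comm, key, smul_smul]
  congr 1
  field_simp
end

section
/- Let A be an associative unital algebra with elements d₁, d₂, s satisfying: s² = 1, s d₁ s = d₂, d₁ d₂ = d₁ s, d₂ d₁ = d₂ s. Define d₁(u) := 1 - d₁/u, d₂(u) := 1 - d₂/u, s(u) := 1 - s/u. Then for all scalars u, v with u, v, u-v ≠ 0: d₁(u)·d₂(u-v)·s(v) = s(v)·d₂(u-v)·d₁(u). -/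
/-- mixed Yang–Baxter equation (ybsp3) for the walled Brauer algebra:
with s² = 1, s d₁ s = d₂, d₁ d₂ = d₁ s, d₂ d₁ = d₂ s, and the baxterized elements
d₁(u) = 1 - d₁/u, d₂(u) = 1 - d₂/u, s(u) = 1 - s/u, one has
d₁(u)·d₂(u-v)·s(v) = s(v)·d₂(u-v)·d₁(u). -/
theorem mixed_yang_baxter_ybsp3 {A : Type*} [Ring A] [Algebra ℂ A]
    (d₁ d₂ s : A) (hs : s * s = 1) (hsd : s * d₁ * s = d₂)
    (h12 : d₁ * d₂ = d₁ * s) (h21 : d₂ * d₁ = d₂ * s) :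
    ∀ u v : ℂ, u ≠ 0 → v ≠ 0 → u - v ≠ 0 →
      ((1 : A) - u⁻¹ • d₁) * ((1 : A) - (u - v)⁻¹ • d₂) * ((1 : A) - v⁻¹ • s) =
      ((1 : A) - v⁻¹ • s) * ((1 : A) - (u - v)⁻¹ • d₂) * ((1 : A) - u⁻¹ • d₁) := by
  intro u v hu hv huv
  have hsd1 : s * d₁ = d₂ * s := by
    rw [← hsd, mul_assoc, mul_assoc, hs, mul_one]
  have hsd2 : s * d₂ = d₁ * s := by
    rw [← hsd, ← mul_assoc, ← mul_assoc, hs, one_mul]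
  have h125 : d₁ * d₂ * s = d₁ := by rw [h12, mul_assoc, hs, mul_one]
  simp only [mul_sub, sub_mul, one_mul, mul_one, smul_mul_assoc, mul_smul_comm,
    smul_smul, h12, h21, hsd1, hsd2]
  rw [show d₁ * s * d₁ = d₁ by rw [mul_assoc, hsd1, ← mul_assoc, h125],
    show d₁ * s * s = d₁ by rw [mul_assoc, hs, mul_one]]
  match_scalars
  all_goals field_simp
  all_goals ring
end

section
/- Let A be an associative unital algebra over ℂ with elements d₁, d₂, s and a scalar δ satisfying: s² = 1, s d₁ s = d₂, d₁² = δ d₁, d₂² = δ d₂, d₁ s d₁ = d₁, d₂ s d₂ = d₂, d₁ d₂ = d₁ s, d₂ d₁ = d₂ s. Define d₁(u) := 1 - d₁/u, d₂(v) := 1 - d₂/v, s(w) := 1 - s/w. Then for all scalars u, v with u, v, δ-u-v ≠ 0: d₁(u)·s(δ-u-v)·d₂(v) = d₂(v)·s(δ-u-v)·d₁(u). -/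
/-- mixed Yang–Baxter equation (ybsp5) for the walled Brauer algebra:
d₁(u)·s(δ-u-v)·d₂(v) = d₂(v)·s(δ-u-v)·d₁(u). -/
theorem mixed_yang_baxter_ybsp5 {A : Type*} [Ring A] [Algebra ℂ A]
    (d₁ d₂ s : A) (δ : ℂ) (hs : s * s = 1) (hsd : s * d₁ * s = d₂)
    (hd1 : d₁ * d₁ = δ • d₁) (hd2 : d₂ * d₂ = δ • d₂)
    (hd1s : d₁ * s * d₁ = d₁) (hd2s : d₂ * s * d₂ = d₂)
    (h12 : d₁ * d₂ = d₁ * s) (h21 : d₂ * d₁ = d₂ * s) :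
    ∀ u v : ℂ, u ≠ 0 → v ≠ 0 → δ - u - v ≠ 0 →
      ((1 : A) - u⁻¹ • d₁) * ((1 : A) - (δ - u - v)⁻¹ • s) * ((1 : A) - v⁻¹ • d₂) =
      ((1 : A) - v⁻¹ • d₂) * ((1 : A) - (δ - u - v)⁻¹ • s) * ((1 : A) - u⁻¹ • d₁) := by
  intro u v hu hv hw
  have e1 : s * d₁ = d₂ * s := by
    rw [← hsd, mul_assoc (s * d₁), hs, mul_one]
  have e2 : s * d₂ = d₁ * s := by
    rw [← hsd, ← mul_assoc, ← mul_assoc, hs, one_mul]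
  have e3 : d₁ * (s * d₂) = δ • (d₁ * s) := by
    rw [e2, ← mul_assoc, hd1, smul_mul_assoc]
  have e4 : d₂ * (s * d₁) = δ • (d₂ * s) := by
    rw [e1, ← mul_assoc, hd2, smul_mul_assoc]
  have h12' : d₁ * d₂ = d₁ * s := h12
  have h21' : d₂ * d₁ = d₂ * s := h21
  simp only [sub_mul, mul_sub, one_mul, mul_one, smul_mul_assoc, mul_smul_comm,
    smul_smul, mul_assoc]
  rw [e1, e2, h12, h21, ← mul_assoc d₁ d₁ s, hd1, ← mul_assoc d₂ d₂ s, hd2,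
    smul_mul_assoc, smul_mul_assoc]
  match_scalars <;> field_simp <;> ring
end

section
/- For each bipartition Λ = (λ_L, λ_R) with |λ_L| = r - f and |λ_R| = s - f for some 0 ≤ f ≤ min(r,s), the standard walled Λ-tableaux of length r+s are in bijection with sequences of contents (c₁,…,c_{r+s}) ∈ ℂ^{r+s} (with δ treated as a transcendental parameter); i.e., a standard walled tableau is uniquely determined by its content sequence. -/
open scoped BigOperators

/-- A standard walled Λ-tableau of length r+s: a path in the Bratteli diagram,
i.e. a sequence of bipartitions starting at (∅,∅), adding a box to the first
diagram at each of the first r steps, then adding a box to the second diagram or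
removing a box from the first diagram at each of the remaining s steps,
ending at Λ (and stationary afterwards). -/
structure WalledTableau (r s : ℕ) (Λ : YoungDiagram × YoungDiagram) where
  seq : ℕ → YoungDiagram × YoungDiagram
  init : seq 0 = (⊥, ⊥)
  final : seq (r + s) = Λ
  stable : ∀ t, r + s ≤ t → seq t = seq (r + s)
  left : ∀ t, 1 ≤ t → t ≤ r →
    (seq t).2 = (seq (t - 1)).2 ∧
    ∃ c, c ∉ (seq (t - 1)).1 ∧ (seq t).1.cells = insert c (seq (t - 1)).1.cells
  right : ∀ t, r < t → t ≤ r + s →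
    ((seq t).1 = (seq (t - 1)).1 ∧
      ∃ c, c ∉ (seq (t - 1)).2 ∧ (seq t).2.cells = insert c (seq (t - 1)).2.cells) ∨
    ((seq t).2 = (seq (t - 1)).2 ∧
      ∃ c, c ∈ (seq (t - 1)).1 ∧ (seq t).1.cells = (seq (t - 1)).1.cells.erase c)

/-- The content of the step from the bipartition `A` to the bipartition `B`
(which differ by exactly one cell): j - i for a cell (i,j) added to the first
diagram, -(j - i) for a cell removed from the first diagram, and (j - i) + δ for
a cell added to the second diagram. -/
noncomputable def stepContent (δ : ℂ) (A B : YoungDiagram × YoungDiagram) : ℂ :=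
  (∑ c ∈ B.1.cells \ A.1.cells, ((c.2 : ℂ) - (c.1 : ℂ))) +
  (∑ c ∈ A.1.cells \ B.1.cells, ((c.1 : ℂ) - (c.2 : ℂ))) +
  (∑ c ∈ B.2.cells \ A.2.cells, ((c.2 : ℂ) - (c.1 : ℂ) + δ))

private lemma insert_sdiff_self' {c : ℕ × ℕ} {s : Finset (ℕ × ℕ)} (h : c ∉ s) :
    insert c s \ s = {c} := by
  ext x
  simp only [Finset.mem_sdiff, Finset.mem_insert, Finset.mem_singleton]
  constructor
  · rintro ⟨hx | hx, hxs⟩ <;> tauto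
  · rintro rfl; exact ⟨Or.inl rfl, h⟩

private lemma sdiff_insert_self' {c : ℕ × ℕ} {s : Finset (ℕ × ℕ)} :
    s \ insert c s = ∅ :=
  Finset.sdiff_eq_empty_iff_subset.mpr (Finset.subset_insert _ _)

private lemma sdiff_erase_self' {c : ℕ × ℕ} {s : Finset (ℕ × ℕ)} (h : c ∈ s) :
    s \ s.erase c = {c} := by
  ext x
  simp only [Finset.mem_sdiff, Finset.mem_erase, Finset.mem_singleton, not_and]
  constructor
  · rintro ⟨hx, hne⟩; by_contra hxc; exact (hne hxc) hx
  · rintro rfl; exact ⟨h, fun h' => absurd rfl h'⟩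

private lemma erase_sdiff_self' {c : ℕ × ℕ} {s : Finset (ℕ × ℕ)} :
    s.erase c \ s = ∅ :=
  Finset.sdiff_eq_empty_iff_subset.mpr (Finset.erase_subset _ _)

private lemma insert_aux (lam ν : YoungDiagram) (c d : ℕ × ℕ)
    (hc : c ∉ lam) (hν : ν.cells = insert d lam.cells)
    (h1 : c.1 ≤ d.1) (h2 : c.2 ≤ d.2) (hne : c ≠ d) : False := by
  have hdν : d ∈ ν := by rw [← YoungDiagram.mem_cells, hν]; exact Finset.mem_insert_self _ _
  have hcν : c ∈ ν := by
    have := ν.up_left_mem h1 h2 (show (d.1, d.2) ∈ ν by simpa using hdν)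
    simpa using this
  rw [← YoungDiagram.mem_cells, hν, Finset.mem_insert] at hcν
  rcases hcν with h' | h'
  · exact hne h'
  · exact hc (by simpa using h')

private lemma content_inj_insert (lam μ ν : YoungDiagram) (c d : ℕ × ℕ)
    (hc : c ∉ lam) (hd : d ∉ lam)
    (hμ : μ.cells = insert c lam.cells) (hν : ν.cells = insert d lam.cells)
    (h : (c.2 : ℤ) - c.1 = (d.2 : ℤ) - d.1) : c = d := by
  by_contra hne
  rcases lt_trichotomy c.1 d.1 with h1 | h1 | h1
  · exact insert_aux lam ν c d hc hν (le_of_lt h1) (by omega) hne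
  · exact hne (Prod.ext h1 (by omega))
  · exact insert_aux lam μ d c hd hμ (le_of_lt h1) (by omega) (Ne.symm hne)

private lemma erase_aux (lam μ : YoungDiagram) (c d : ℕ × ℕ)
    (hd : d ∈ lam) (hμ : μ.cells = lam.cells.erase c)
    (h1 : c.1 ≤ d.1) (h2 : c.2 ≤ d.2) (hne : c ≠ d) : False := by
  have hdμ : d ∈ μ := by
    rw [← YoungDiagram.mem_cells, hμ, Finset.mem_erase]
    exact ⟨Ne.symm hne, hd⟩
  have hcμ : c ∈ μ := by
    have := μ.up_left_mem h1 h2 (show (d.1, d.2) ∈ μ by simpa using hdμ)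
    simpa using this
  rw [← YoungDiagram.mem_cells, hμ, Finset.mem_erase] at hcμ
  exact hcμ.1 rfl

private lemma content_inj_erase (lam μ ν : YoungDiagram) (c d : ℕ × ℕ)
    (hc : c ∈ lam) (hd : d ∈ lam)
    (hμ : μ.cells = lam.cells.erase c) (hν : ν.cells = lam.cells.erase d)
    (h : (c.2 : ℤ) - c.1 = (d.2 : ℤ) - d.1) : c = d := by
  by_contra hne
  rcases lt_trichotomy c.1 d.1 with h1 | h1 | h1
  · exact erase_aux lam μ c d hd hμ (le_of_lt h1) (by omega) hne
  · exact hne (Prod.ext h1 (by omega))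
  · exact erase_aux lam ν d c hc hν (le_of_lt h1) (by omega) (Ne.symm hne)

private lemma stepContent_addLeft (δ : ℂ) (A B : YoungDiagram × YoungDiagram) (c : ℕ × ℕ)
    (hc : c ∉ A.1) (h1 : B.1.cells = insert c A.1.cells) (h2 : B.2 = A.2) :
    stepContent δ A B = (c.2 : ℂ) - c.1 := by
  have hc' : c ∉ A.1.cells := fun h => hc (by simpa using h)
  unfold stepContent
  rw [h1, h2, Finset.sdiff_self, insert_sdiff_self' hc', sdiff_insert_self',
    Finset.sum_singleton, Finset.sum_empty, Finset.sum_empty]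
  ring

private lemma stepContent_addRight (δ : ℂ) (A B : YoungDiagram × YoungDiagram) (c : ℕ × ℕ)
    (hc : c ∉ A.2) (h1 : B.2.cells = insert c A.2.cells) (h2 : B.1 = A.1) :
    stepContent δ A B = (c.2 : ℂ) - c.1 + δ := by
  have hc' : c ∉ A.2.cells := fun h => hc (by simpa using h)
  unfold stepContent
  rw [h1, h2, Finset.sdiff_self, insert_sdiff_self' hc',
    Finset.sum_singleton, Finset.sum_empty, Finset.sum_empty]
  ring

private lemma stepContent_removeLeft (δ : ℂ) (A B : YoungDiagram × YoungDiagram) (c : ℕ × ℕ)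
    (hc : c ∈ A.1) (h1 : B.1.cells = A.1.cells.erase c) (h2 : B.2 = A.2) :
    stepContent δ A B = (c.1 : ℂ) - c.2 := by
  have hc' : c ∈ A.1.cells := by simpa using hc
  unfold stepContent
  rw [h1, h2, Finset.sdiff_self, erase_sdiff_self', sdiff_erase_self' hc',
    Finset.sum_singleton, Finset.sum_empty, Finset.sum_empty]
  ring

/-- with δ transcendental (in particular δ differs from every integer),
a standard walled Λ-tableau is uniquely determined by its sequence of contents. -/
theorem walled_tableau_determined_by_contents
    (δ : ℂ) (hδ : ∀ n : ℤ, δ ≠ (n : ℂ))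
    (r s : ℕ) (Λ : YoungDiagram × YoungDiagram)
    (T₁ T₂ : WalledTableau r s Λ)
    (h : ∀ t < r + s, stepContent δ (T₁.seq t) (T₁.seq (t + 1)) =
      stepContent δ (T₂.seq t) (T₂.seq (t + 1))) :
    ∀ t, T₁.seq t = T₂.seq t := by
  intro t
  induction t with
  | zero => rw [T₁.init, T₂.init]
  | succ t ih =>
    rcases le_or_gt (r + s) t with hle | hlt
    · rw [T₁.stable (t + 1) (le_trans hle (Nat.le_succ t)),
        T₂.stable (t + 1) (le_trans hle (Nat.le_succ t)), T₁.final, T₂.final]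
    · have hc := h t hlt
      rcases le_or_gt (t + 1) r with hr | hr
      · obtain ⟨h1b, c₁, hc₁, hcell₁⟩ := T₁.left (t + 1) (Nat.succ_le_succ (Nat.zero_le t)) hr
        obtain ⟨h2b, c₂, hc₂, hcell₂⟩ := T₂.left (t + 1) (Nat.succ_le_succ (Nat.zero_le t)) hr
        simp only [Nat.add_sub_cancel] at h1b hcell₁ hc₁ h2b hcell₂ hc₂
        rw [← ih] at h2b hcell₂ hc₂ hc
        rw [stepContent_addLeft δ _ _ c₁ hc₁ hcell₁ h1b,
          stepContent_addLeft δ _ _ c₂ hc₂ hcell₂ h2b] at hc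
        have hz : (c₁.2 : ℤ) - c₁.1 = (c₂.2 : ℤ) - c₂.1 := by exact_mod_cast hc
        have hcd : c₁ = c₂ :=
          content_inj_insert (T₁.seq t).1 (T₁.seq (t + 1)).1 (T₂.seq (t + 1)).1 c₁ c₂
            hc₁ hc₂ hcell₁ hcell₂ hz
        refine Prod.ext (YoungDiagram.ext ?_) ?_
        · rw [hcell₁, hcell₂, hcd]
        · rw [h1b, h2b]
      · have hsum : t + 1 ≤ r + s := hlt
        rcases T₁.right (t + 1) hr hsum with ⟨h1a, c₁, hc₁, hcell₁⟩ | ⟨h1b, c₁, hc₁, hcell₁⟩ <;>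
          rcases T₂.right (t + 1) hr hsum with ⟨h2a, c₂, hc₂, hcell₂⟩ | ⟨h2b, c₂, hc₂, hcell₂⟩ <;>
          simp only [Nat.add_sub_cancel] at * <;>
          [skip; skip; skip; skip]
        · rw [← ih] at h2a hcell₂ hc₂ hc
          rw [stepContent_addRight δ _ _ c₁ hc₁ hcell₁ h1a,
            stepContent_addRight δ _ _ c₂ hc₂ hcell₂ h2a] at hc
          have hc' : ((c₁.2 : ℂ) - c₁.1) = ((c₂.2 : ℂ) - c₂.1) := by
            linear_combination hc
          have hz : (c₁.2 : ℤ) - c₁.1 = (c₂.2 : ℤ) - c₂.1 := by exact_mod_cast hc'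
          have hcd : c₁ = c₂ :=
            content_inj_insert (T₁.seq t).2 (T₁.seq (t + 1)).2 (T₂.seq (t + 1)).2 c₁ c₂
              hc₁ hc₂ hcell₁ hcell₂ hz
          refine Prod.ext ?_ (YoungDiagram.ext ?_)
          · rw [h1a, h2a]
          · rw [hcell₁, hcell₂, hcd]
        · rw [← ih] at h2b hcell₂ hc₂ hc
          rw [stepContent_addRight δ _ _ c₁ hc₁ hcell₁ h1a,
            stepContent_removeLeft δ _ _ c₂ hc₂ hcell₂ h2b] at hc
          exact absurd (show δ = ((c₂.1 : ℤ) - c₂.2 - c₁.2 + c₁.1 : ℤ) by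
            push_cast; linear_combination hc) (hδ _)
        · rw [← ih] at h2a hcell₂ hc₂ hc
          rw [stepContent_removeLeft δ _ _ c₁ hc₁ hcell₁ h1b,
            stepContent_addRight δ _ _ c₂ hc₂ hcell₂ h2a] at hc
          exact absurd (show δ = ((c₁.1 : ℤ) - c₁.2 - c₂.2 + c₂.1 : ℤ) by
            push_cast; linear_combination -hc) (hδ _)
        · rw [← ih] at h2b hcell₂ hc₂ hc
          rw [stepContent_removeLeft δ _ _ c₁ hc₁ hcell₁ h1b,
            stepContent_removeLeft δ _ _ c₂ hc₂ hcell₂ h2b] at hc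
          have hz : (c₁.2 : ℤ) - c₁.1 = (c₂.2 : ℤ) - c₂.1 := by
            have : ((c₁.1 : ℂ)) - c₁.2 = (c₂.1 : ℂ) - c₂.2 := hc
            have : ((c₁.1 : ℤ)) - c₁.2 = (c₂.1 : ℤ) - c₂.2 := by exact_mod_cast this
            omega
          have hcd : c₁ = c₂ :=
            content_inj_erase (T₁.seq t).1 (T₁.seq (t + 1)).1 (T₂.seq (t + 1)).1 c₁ c₂
              hc₁ hc₂ hcell₁ hcell₂ hz
          refine Prod.ext (YoungDiagram.ext ?_) ?_
          · rw [hcell₁, hcell₂, hcd]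
          · rw [h1b, h2b]
end

section
/- Standard walled Λ-tableaux T = (Λ⁽⁰⁾,…,Λ⁽ʳ⁺ˢ⁾) are in bijection with standard triple tableaux: triples [λ'(T), ν(T), λ''(T)] of Young diagrams with ν(T) ⊆ λ'(T), |λ'(T)| = r, where λ'(T) is filled standardly with 1,…,r, and the cells of (λ'(T)∖ν(T)) ⊔ λ''(T) are filled bijectively with r+1,…,r+s recording the order of removals from the first diagram and additions to the second, such that removals always occur at cells removable at that stage and additions at cells addable at that stage. -/
open scoped BigOperators

namespace WalledTableau

variable {r s : ℕ} {Λ : YoungDiagram × YoungDiagram}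

theorem ext' {A B : WalledTableau r s Λ} (h : A.seq = B.seq) : A = B := by
  cases A; cases B; cases h; rfl

theorem right_bot (T : WalledTableau r s Λ) : ∀ t, t ≤ r → (T.seq t).2 = ⊥ := by
  intro t
  induction t with
  | zero => intro _; rw [T.init]
  | succ n ih =>
    intro h
    have h2 := (T.left (n + 1) (by omega) h).1
    simp only [Nat.add_sub_cancel] at h2
    rw [h2, ih (by omega)]

theorem left_mono (T : WalledTableau r s Λ) {t t' : ℕ} (h : t ≤ t') (h' : t' ≤ r) :
    (T.seq t).1.cells ⊆ (T.seq t').1.cells := by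
  induction t', h using Nat.le_induction with
  | base => exact Finset.Subset.refl _
  | succ t' ht ih =>
    obtain ⟨-, c, -, hc⟩ := T.left (t' + 1) (by omega) h'
    simp only [Nat.add_sub_cancel] at hc
    rw [hc]
    exact (ih (by omega)).trans (Finset.subset_insert _ _)

theorem left_anti (T : WalledTableau r s Λ) {t t' : ℕ} (hr : r ≤ t) (h : t ≤ t') :
    (T.seq t').1.cells ⊆ (T.seq t).1.cells := by
  induction t', h using Nat.le_induction with
  | base => exact Finset.Subset.refl _
  | succ t' ht ih =>
    by_cases hle : t' + 1 ≤ r + s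
    · rcases T.right (t' + 1) (by omega) hle with ⟨h1, -⟩ | ⟨-, c, -, h1⟩ <;>
        simp only [Nat.add_sub_cancel] at h1
      · rw [h1]; exact ih
      · rw [h1]; exact (Finset.erase_subset _ _).trans ih
    · rw [T.stable (t' + 1) (by omega), ← T.stable t' (by omega)]; exact ih

theorem right_mono (T : WalledTableau r s Λ) {t t' : ℕ} (h : t ≤ t') :
    (T.seq t).2.cells ⊆ (T.seq t').2.cells := by
  induction t', h using Nat.le_induction with
  | base => exact Finset.Subset.refl _
  | succ t' ht ih =>
    by_cases h1 : t' + 1 ≤ r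
    · have h2 := (T.left (t' + 1) (by omega) h1).1
      simp only [Nat.add_sub_cancel] at h2
      rw [h2]; exact ih
    · by_cases h2 : t' + 1 ≤ r + s
      · rcases T.right (t' + 1) (by omega) h2 with ⟨-, c, -, hc⟩ | ⟨hc, -⟩ <;>
          simp only [Nat.add_sub_cancel] at hc
        · rw [hc]; exact ih.trans (Finset.subset_insert _ _)
        · rw [hc]; exact ih
      · rw [T.stable (t' + 1) (by omega), ← T.stable t' (by omega)]; exact ih

theorem card_left (T : WalledTableau r s Λ) : ∀ t, t ≤ r → (T.seq t).1.cells.card = t := by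
  intro t
  induction t with
  | zero => intro _; rw [T.init]; simp [YoungDiagram.cells_bot]
  | succ n ih =>
    intro h
    obtain ⟨-, c, hc, hcells⟩ := T.left (n + 1) (by omega) h
    simp only [Nat.add_sub_cancel] at hc hcells
    rw [hcells, Finset.card_insert_of_notMem (by simpa using hc), ih (by omega)]

/-- time a cell is added to the left diagram -/
noncomputable def aL (T : WalledTableau r s Λ) (c : ℕ × ℕ) : ℕ := sInf {t : ℕ | c ∈ (T.seq t).1}

/-- time a cell is removed from the left diagram -/
noncomputable def dSk (T : WalledTableau r s Λ) (c : ℕ × ℕ) : ℕ :=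
  sInf {t : ℕ | r < t ∧ c ∉ (T.seq t).1}

/-- time a cell is added to the right diagram -/
noncomputable def aR (T : WalledTableau r s Λ) (c : ℕ × ℕ) : ℕ := sInf {t : ℕ | c ∈ (T.seq t).2}

section aL
variable (T : WalledTableau r s Λ) {c : ℕ × ℕ}

theorem aL_le_r (hc : c ∈ (T.seq r).1) : T.aL c ≤ r := Nat.sInf_le hc

theorem aL_spec (hc : c ∈ (T.seq r).1) : c ∈ (T.seq (T.aL c)).1 :=
  Nat.sInf_mem (s := {t : ℕ | c ∈ (T.seq t).1}) ⟨r, hc⟩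

theorem aL_pos (hc : c ∈ (T.seq r).1) : 1 ≤ T.aL c := by
  by_contra h
  have h2 : c ∈ (T.seq 0).1 := by
    have := T.aL_spec hc
    rwa [show T.aL c = 0 by omega] at this
  rw [T.init] at h2
  simpa using h2

theorem mem_left_iff_le_r (hc : c ∈ (T.seq r).1) {t : ℕ} (ht : t ≤ r) : c ∈ (T.seq t).1 ↔ T.aL c ≤ t := by
  constructor
  · exact fun h => Nat.sInf_le h
  · intro h
    have := T.left_mono h ht
    exact this (T.aL_spec hc)

theorem aL_inj {c c' : ℕ × ℕ} (hc : c ∈ (T.seq r).1) (hc' : c' ∈ (T.seq r).1)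
    (h : T.aL c = T.aL c') : c = c' := by
  have h1 := T.aL_pos hc
  have h2 := T.aL_le_r hc
  have hm : c ∈ (T.seq (T.aL c)).1 := T.aL_spec hc
  have hm' : c' ∈ (T.seq (T.aL c)).1 := by rw [h]; exact T.aL_spec hc'
  have hn : c ∉ (T.seq (T.aL c - 1)).1 := by
    have hlt0 : T.aL c - 1 < T.aL c := by omega
    exact Nat.notMem_of_lt_sInf (s := {t : ℕ | c ∈ (T.seq t).1}) hlt0
  have hn' : c' ∉ (T.seq (T.aL c - 1)).1 := by
    have hlt : T.aL c - 1 < T.aL c' := by omega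
    exact Nat.notMem_of_lt_sInf (s := {t : ℕ | c' ∈ (T.seq t).1}) hlt
  obtain ⟨-, d, -, hd⟩ := T.left (T.aL c) h1 h2
  have e1 : c = d := by
    have : c ∈ (T.seq (T.aL c)).1.cells := hm
    rw [hd] at this
    rcases Finset.mem_insert.mp this with h' | h'
    · exact h'
    · exact absurd h' hn
  have e2 : c' = d := by
    have : c' ∈ (T.seq (T.aL c)).1.cells := hm'
    rw [hd] at this
    rcases Finset.mem_insert.mp this with h' | h'
    · exact h'
    · exact absurd h' hn'
  rw [e1, e2]

/-- characterization of the left diagram before the wall -/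
theorem C1 {t : ℕ} (ht : t ≤ r) :
    (T.seq t).1.cells = (T.seq r).1.cells.filter (fun c => T.aL c ≤ t) := by
  ext x
  simp only [Finset.mem_filter]
  constructor
  · intro hx
    have hxr : x ∈ (T.seq r).1.cells := T.left_mono ht le_rfl hx
    exact ⟨hxr, (T.mem_left_iff_le_r hxr ht).mp hx⟩
  · rintro ⟨hxr, hx⟩
    exact (T.mem_left_iff_le_r hxr ht).mpr hx

end aL

section dSk
variable (T : WalledTableau r s Λ) {c : ℕ × ℕ}

theorem mem_left_of_nu (hc : c ∈ Λ.1) {t : ℕ} (ht : r ≤ t) : c ∈ (T.seq t).1 := by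
  have hfin : c ∈ (T.seq (r + s)).1 := by rw [T.final]; exact hc
  by_cases h : t ≤ r + s
  · exact T.left_anti ht h hfin
  · rw [T.stable t (by omega)]; exact hfin

theorem dSk_nonempty (hc : c ∈ (T.seq r).1) (hn : c ∉ Λ.1) :
    (r + s) ∈ {t : ℕ | r < t ∧ c ∉ (T.seq t).1} := by
  have hs : s ≠ 0 := by
    intro h
    apply hn
    have h2 : (T.seq (r + s)).1 = Λ.1 := by rw [T.final]
    rw [← h2]
    have h3 : r + s = r := by omega
    rw [h3]; exact hc
  refine ⟨by omega, ?_⟩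
  rw [T.final]; exact hn

theorem dSk_gt_r (hc : c ∈ (T.seq r).1) (hn : c ∉ Λ.1) : r < T.dSk c :=
  (Nat.sInf_mem (s := {t : ℕ | r < t ∧ c ∉ (T.seq t).1}) ⟨_, T.dSk_nonempty hc hn⟩).1

theorem dSk_spec (hc : c ∈ (T.seq r).1) (hn : c ∉ Λ.1) : c ∉ (T.seq (T.dSk c)).1 :=
  (Nat.sInf_mem (s := {t : ℕ | r < t ∧ c ∉ (T.seq t).1}) ⟨_, T.dSk_nonempty hc hn⟩).2

theorem dSk_le (hc : c ∈ (T.seq r).1) (hn : c ∉ Λ.1) : T.dSk c ≤ r + s :=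
  Nat.sInf_le (T.dSk_nonempty hc hn)

theorem mem_left_iff_r_le (hc : c ∈ (T.seq r).1) (hn : c ∉ Λ.1) {t : ℕ} (ht : r ≤ t) :
    c ∈ (T.seq t).1 ↔ t < T.dSk c := by
  constructor
  · intro h
    by_contra h'
    have hd := T.dSk_gt_r hc hn
    have : c ∈ (T.seq (T.dSk c)).1 := T.left_anti (by omega) (by omega) h
    exact T.dSk_spec hc hn this
  · intro h
    have : t ∉ {u : ℕ | r < u ∧ c ∉ (T.seq u).1} := Nat.notMem_of_lt_sInf h
    simp only [Set.mem_setOf_eq, not_and, not_not] at this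
    rcases Nat.lt_or_ge r t with h' | h'
    · exact this h'
    · have : t = r := by omega
      rw [this]; exact hc

theorem mem_left_of_dSk_eq (hc : c ∈ (T.seq r).1) (hn : c ∉ Λ.1) {t : ℕ}
    (h : T.dSk c = t) : c ∈ (T.seq (t - 1)).1 := by
  have h1 := T.dSk_gt_r hc hn
  rcases le_or_gt t (r + 1) with h' | h'
  · have : t - 1 = r := by omega
    rw [this]; exact hc
  · exact (T.mem_left_iff_r_le hc hn (by omega)).mpr (by omega)

/-- characterization of the left diagram after the wall -/
theorem C2 {t : ℕ} (ht : r ≤ t) :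
    (T.seq t).1.cells =
      (T.seq r).1.cells.filter (fun c => c ∈ Λ.1.cells ∨ t < T.dSk c) := by
  ext x
  simp only [Finset.mem_filter, YoungDiagram.mem_cells]
  constructor
  · intro hx
    have hxr : x ∈ (T.seq r).1 := T.left_anti le_rfl ht hx
    refine ⟨hxr, ?_⟩
    by_cases hn : x ∈ Λ.1
    · exact Or.inl hn
    · exact Or.inr ((T.mem_left_iff_r_le hxr hn ht).mp hx)
  · rintro ⟨hxr, hx | hx⟩
    · exact T.mem_left_of_nu hx ht
    · by_cases hn : x ∈ Λ.1
      · exact T.mem_left_of_nu hn ht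
      · exact (T.mem_left_iff_r_le hxr hn ht).mpr hx

end dSk

section aR
variable (T : WalledTableau r s Λ) {c : ℕ × ℕ}

theorem aR_nonempty (hc : c ∈ Λ.2) : (r + s) ∈ {t : ℕ | c ∈ (T.seq t).2} := by
  show c ∈ (T.seq (r + s)).2; rw [T.final]; exact hc

theorem aR_spec (hc : c ∈ Λ.2) : c ∈ (T.seq (T.aR c)).2 :=
  Nat.sInf_mem (s := {t : ℕ | c ∈ (T.seq t).2}) ⟨_, T.aR_nonempty hc⟩

theorem aR_le (hc : c ∈ Λ.2) : T.aR c ≤ r + s := Nat.sInf_le (T.aR_nonempty hc)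

theorem aR_gt_r (hc : c ∈ Λ.2) : r < T.aR c := by
  by_contra h
  have h2 := T.aR_spec hc
  rw [T.right_bot (T.aR c) (by omega)] at h2
  simpa using h2

theorem mem_right_iff (hc : c ∈ Λ.2) {t : ℕ} : c ∈ (T.seq t).2 ↔ T.aR c ≤ t := by
  constructor
  · exact fun h => Nat.sInf_le h
  · intro h
    exact T.right_mono h (T.aR_spec hc)

theorem mem_final_right {t : ℕ} (h : c ∈ (T.seq t).2) : c ∈ Λ.2 := by
  rw [← T.final]
  by_cases h' : t ≤ r + s
  · exact T.right_mono h' h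
  · rwa [T.stable t (by omega)] at h

/-- characterization of the right diagram -/
theorem C3 (t : ℕ) :
    (T.seq t).2.cells = Λ.2.cells.filter (fun c => T.aR c ≤ t) := by
  ext x
  simp only [Finset.mem_filter, YoungDiagram.mem_cells]
  constructor
  · intro hx
    have h2 := T.mem_final_right hx
    exact ⟨h2, (T.mem_right_iff h2).mp hx⟩
  · rintro ⟨h1, h2⟩
    exact (T.mem_right_iff h1).mpr h2

end aR

section inj
variable (T : WalledTableau r s Λ)

theorem dSk_inj {c c' : ℕ × ℕ} (hc : c ∈ (T.seq r).1) (hn : c ∉ Λ.1)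
    (hc' : c' ∈ (T.seq r).1) (hn' : c' ∉ Λ.1) (h : T.dSk c = T.dSk c') : c = c' := by
  set t := T.dSk c with htdef
  have h1 : r < t := T.dSk_gt_r hc hn
  have h2 : t ≤ r + s := T.dSk_le hc hn
  have hm : c ∈ (T.seq (t - 1)).1 := T.mem_left_of_dSk_eq hc hn rfl
  have hm' : c' ∈ (T.seq (t - 1)).1 := T.mem_left_of_dSk_eq hc' hn' h.symm
  have hout : c ∉ (T.seq t).1 := T.dSk_spec hc hn
  have hout' : c' ∉ (T.seq t).1 := by
    have := T.dSk_spec hc' hn'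
    rwa [← h] at this
  rcases T.right t h1 h2 with ⟨heq, -⟩ | ⟨-, d, hd, hcells⟩
  · exact absurd (heq ▸ hm : c ∈ (T.seq t).1) hout
  · have e1 : c = d := by
      by_contra hne
      refine hout ?_
      have : c ∈ (T.seq t).1.cells := by
        rw [hcells]; exact Finset.mem_erase.mpr ⟨hne, hm⟩
      exact this
    have e2 : c' = d := by
      by_contra hne
      refine hout' ?_
      have : c' ∈ (T.seq t).1.cells := by
        rw [hcells]; exact Finset.mem_erase.mpr ⟨hne, hm'⟩
      exact this
    rw [e1, e2]

theorem aR_inj {c c' : ℕ × ℕ} (hc : c ∈ Λ.2) (hc' : c' ∈ Λ.2)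
    (h : T.aR c = T.aR c') : c = c' := by
  set t := T.aR c with htdef
  have h1 : r < t := T.aR_gt_r hc
  have h2 : t ≤ r + s := T.aR_le hc
  have hm : c ∈ (T.seq t).2 := T.aR_spec hc
  have hm' : c' ∈ (T.seq t).2 := by
    have := T.aR_spec hc'
    rwa [← h] at this
  have hout : c ∉ (T.seq (t - 1)).2 := by
    have hlt : t - 1 < T.aR c := by omega
    exact Nat.notMem_of_lt_sInf (s := {u : ℕ | c ∈ (T.seq u).2}) hlt
  have hout' : c' ∉ (T.seq (t - 1)).2 := by
    have hlt : t - 1 < T.aR c' := by omega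
    exact Nat.notMem_of_lt_sInf (s := {u : ℕ | c' ∈ (T.seq u).2}) hlt
  rcases T.right t h1 h2 with ⟨-, d, hd, hcells⟩ | ⟨heq, -⟩
  · have e1 : c = d := by
      have : c ∈ (T.seq t).2.cells := hm
      rw [hcells] at this
      rcases Finset.mem_insert.mp this with h' | h'
      · exact h'
      · exact absurd h' hout
    have e2 : c' = d := by
      have : c' ∈ (T.seq t).2.cells := hm'
      rw [hcells] at this
      rcases Finset.mem_insert.mp this with h' | h'
      · exact h'
      · exact absurd h' hout'
    rw [e1, e2]
  · exact absurd (heq ▸ hm : c ∈ (T.seq (t-1)).2) hout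

theorem dSk_ne_aR {c c' : ℕ × ℕ} (hc : c ∈ (T.seq r).1) (hn : c ∉ Λ.1)
    (hc' : c' ∈ Λ.2) : T.dSk c ≠ T.aR c' := by
  intro h
  set t := T.dSk c with htdef
  have h1 : r < t := T.dSk_gt_r hc hn
  have h2 : t ≤ r + s := T.dSk_le hc hn
  have hm : c ∈ (T.seq (t - 1)).1 := T.mem_left_of_dSk_eq hc hn rfl
  have hout : c ∉ (T.seq t).1 := T.dSk_spec hc hn
  have hm' : c' ∈ (T.seq t).2 := by rw [h]; exact T.aR_spec hc'
  have hout' : c' ∉ (T.seq (t - 1)).2 := by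
    have hlt : t - 1 < T.aR c' := by omega
    exact Nat.notMem_of_lt_sInf (s := {u : ℕ | c' ∈ (T.seq u).2}) hlt
  rcases T.right t h1 h2 with ⟨heq, -⟩ | ⟨heq, -⟩
  · exact absurd (heq ▸ hm : c ∈ (T.seq t).1) hout
  · exact absurd (heq ▸ hm' : c' ∈ (T.seq (t-1)).2) hout'

theorem count_after : ∀ k, k ≤ s →
    ((T.seq r).1.cells \ (T.seq (r + k)).1.cells).card + (T.seq (r + k)).2.cells.card = k := by
  intro k
  induction k with
  | zero =>
    intro _
    have h0 : (T.seq (r + 0)).2 = ⊥ := T.right_bot _ (by omega)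
    rw [h0]
    simp [YoungDiagram.cells_bot]
  | succ n ih =>
    intro h
    have hih := ih (by omega)
    rcases T.right (r + n + 1) (by omega) (by omega) with ⟨heq, d, hd, hcells⟩ |
        ⟨heq, d, hd, hcells⟩ <;>
      simp only [show r + n + 1 - 1 = r + n from rfl] at heq hd hcells <;>
      rw [show r + (n + 1) = r + n + 1 from rfl]
    · rw [heq, hcells, Finset.card_insert_of_notMem (by simpa using hd)]
      omega
    · rw [heq, hcells]
      have hdr : d ∈ (T.seq r).1.cells := T.left_anti le_rfl (by omega) hd
      rw [Finset.sdiff_erase hdr, Finset.card_insert_of_notMem (by simp [hd])]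
      omega

end inj

end WalledTableau

/-- A standard triple tableau: Young diagrams ν ⊆ λ' (with |λ'| = r) and λ'', a
standard filling of λ' by 1,…,r, and a filling of (λ'∖ν) ⊔ λ'' by r+1,…,r+s
recording the order of removals from the first diagram and additions to the second,
such that removals always occur at cells removable at that stage and additions at
cells addable at that stage (i.e. every intermediate stage is a Young diagram). -/
structure TripleTableau (r s : ℕ) where
  lam' : YoungDiagram
  nu : YoungDiagram
  lam'' : YoungDiagram
  sub : nu ≤ lam'
  cardL : lam'.cells.card = r
  cardAfter : (lam'.cells \ nu.cells).card + lam''.cells.card = s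
  fL : ℕ × ℕ → ℕ
  fSk : ℕ × ℕ → ℕ
  fR : ℕ × ℕ → ℕ
  fL_mem : ∀ c ∈ lam'.cells, 1 ≤ fL c ∧ fL c ≤ r
  fL_inj : Set.InjOn fL ↑lam'.cells
  fL_junk : ∀ c ∉ lam'.cells, fL c = 0
  fSk_mem : ∀ c ∈ lam'.cells \ nu.cells, r + 1 ≤ fSk c ∧ fSk c ≤ r + s
  fSk_inj : Set.InjOn fSk ↑(lam'.cells \ nu.cells)
  fSk_junk : ∀ c ∉ lam'.cells \ nu.cells, fSk c = 0
  fR_mem : ∀ c ∈ lam''.cells, r + 1 ≤ fR c ∧ fR c ≤ r + s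
  fR_inj : Set.InjOn fR ↑lam''.cells
  fR_junk : ∀ c ∉ lam''.cells, fR c = 0
  disj : ∀ c ∈ lam'.cells \ nu.cells, ∀ c' ∈ lam''.cells, fSk c ≠ fR c'
  stepL : ∀ t : ℕ, ∃ μ : YoungDiagram,
    μ.cells = lam'.cells.filter (fun c => fL c ≤ t)
  stepSk : ∀ t : ℕ, ∃ μ : YoungDiagram,
    μ.cells = lam'.cells.filter (fun c => c ∈ nu.cells ∨ t < fSk c)
  stepR : ∀ t : ℕ, ∃ μ : YoungDiagram,
    μ.cells = lam''.cells.filter (fun c => fR c ≤ t)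

theorem TripleTableau.ext' {r s : ℕ} {A B : TripleTableau r s}
    (h1 : A.lam' = B.lam') (h2 : A.nu = B.nu) (h3 : A.lam'' = B.lam'')
    (h4 : A.fL = B.fL) (h5 : A.fSk = B.fSk) (h6 : A.fR = B.fR) : A = B := by
  cases A; cases B
  simp only at h1 h2 h3 h4 h5 h6
  subst h1; subst h2; subst h3; subst h4; subst h5; subst h6
  rfl

namespace WalledTableau

variable {r s : ℕ} {Λ : YoungDiagram × YoungDiagram}

/-- the triple tableau associated to a walled tableau -/
noncomputable def toTriple (T : WalledTableau r s Λ) : TripleTableau r s where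
  lam' := (T.seq r).1
  nu := Λ.1
  lam'' := Λ.2
  sub := by
    rw [← YoungDiagram.cells_subset_iff]
    have h : Λ.1 = (T.seq (r + s)).1 := by rw [T.final]
    rw [h]
    exact T.left_anti le_rfl (by omega)
  cardL := T.card_left r le_rfl
  cardAfter := by
    have := T.count_after s le_rfl
    rwa [T.final] at this
  fL := fun c => if c ∈ (T.seq r).1 then T.aL c else 0
  fSk := fun c => if c ∈ (T.seq r).1.cells \ Λ.1.cells then T.dSk c else 0
  fR := fun c => if c ∈ Λ.2 then T.aR c else 0
  fL_mem := by
    intro c hc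
    rw [if_pos (YoungDiagram.mem_cells c |>.mp hc)]
    exact ⟨T.aL_pos hc, T.aL_le_r hc⟩
  fL_inj := by
    intro c hc c' hc' h
    dsimp only at h
    simp only [Finset.coe_sort_coe, Finset.mem_coe, YoungDiagram.mem_cells] at hc hc'
    rw [if_pos hc, if_pos hc'] at h
    exact T.aL_inj hc hc' h
  fL_junk := fun c hc => if_neg (fun h => hc h)
  fSk_mem := by
    intro c hc
    rw [if_pos hc]
    rw [Finset.mem_sdiff] at hc
    obtain ⟨h1, h2⟩ := hc
    have hn : c ∉ Λ.1 := fun h => h2 h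
    exact ⟨T.dSk_gt_r h1 hn, T.dSk_le h1 hn⟩
  fSk_inj := by
    intro c hc c' hc' h
    dsimp only at h
    simp only [Finset.coe_sort_coe, Finset.mem_coe] at hc hc'
    rw [if_pos hc, if_pos hc'] at h
    rw [Finset.mem_sdiff] at hc hc'
    exact T.dSk_inj hc.1 (fun h' => hc.2 h') hc'.1 (fun h' => hc'.2 h') h
  fSk_junk := fun c hc => if_neg hc
  fR_mem := by
    intro c hc
    rw [if_pos (YoungDiagram.mem_cells c |>.mp hc)]
    have h1 := T.aR_gt_r hc
    exact ⟨by omega, T.aR_le hc⟩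
  fR_inj := by
    intro c hc c' hc' h
    dsimp only at h
    simp only [Finset.coe_sort_coe, Finset.mem_coe, YoungDiagram.mem_cells] at hc hc'
    rw [if_pos hc, if_pos hc'] at h
    exact T.aR_inj hc hc' h
  fR_junk := fun c hc => if_neg (fun h => hc h)
  disj := by
    intro c hc c' hc' h
    rw [if_pos hc, if_pos (YoungDiagram.mem_cells c' |>.mp hc')] at h
    rw [Finset.mem_sdiff] at hc
    exact T.dSk_ne_aR hc.1 (fun h' => hc.2 h') hc' h
  stepL := by
    intro t
    by_cases ht : t ≤ r
    · refine ⟨(T.seq t).1, ?_⟩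
      rw [T.C1 ht]
      refine Finset.filter_congr ?_
      intro c hc
      rw [if_pos (YoungDiagram.mem_cells c |>.mp hc)]
    · refine ⟨(T.seq r).1, ?_⟩
      rw [Finset.filter_true_of_mem]
      intro c hc
      rw [if_pos (YoungDiagram.mem_cells c |>.mp hc)]
      exact (T.aL_le_r hc).trans (by omega)
  stepSk := by
    intro t
    by_cases ht : t ≤ r
    · refine ⟨(T.seq r).1, ?_⟩
      rw [Finset.filter_true_of_mem]
      intro c hc
      by_cases hn : c ∈ Λ.1
      · exact Or.inl hn
      · refine Or.inr ?_
        rw [if_pos (Finset.mem_sdiff.mpr ⟨hc, fun h => hn h⟩)]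
        have := T.dSk_gt_r (YoungDiagram.mem_cells c |>.mp hc) hn
        omega
    · refine ⟨(T.seq (min t (r + s))).1, ?_⟩
      rw [T.C2 (le_min (by omega) (by omega))]
      refine Finset.filter_congr ?_
      intro c hc
      by_cases hn : c ∈ Λ.1
      · simp [hn]
      · have hsd : c ∈ (T.seq r).1.cells \ Λ.1.cells :=
          Finset.mem_sdiff.mpr ⟨hc, fun h => hn h⟩
        rw [if_pos hsd]
        have h1 := T.dSk_gt_r (YoungDiagram.mem_cells c |>.mp hc) hn
        have h2 := T.dSk_le (YoungDiagram.mem_cells c |>.mp hc) hn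
        constructor
        · rintro (h | h)
          · exact absurd h hn
          · exact Or.inr (by omega)
        · rintro (h | h)
          · exact absurd h hn
          · exact Or.inr (by omega)
  stepR := by
    intro t
    refine ⟨(T.seq (min t (r + s))).2, ?_⟩
    rw [T.C3]
    refine Finset.filter_congr ?_
    intro c hc
    rw [if_pos (YoungDiagram.mem_cells c |>.mp hc)]
    have h1 := T.aR_le (YoungDiagram.mem_cells c |>.mp hc)
    have h2 := T.aR_gt_r (YoungDiagram.mem_cells c |>.mp hc)
    omega

end WalledTableau

namespace TripleTableau

variable {r s : ℕ} (W : TripleTableau r s)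

theorem fL_surj {t : ℕ} (h1 : 1 ≤ t) (h2 : t ≤ r) : ∃ c ∈ W.lam'.cells, W.fL c = t := by
  have himg : W.lam'.cells.image W.fL = Finset.Icc 1 r := by
    refine Finset.eq_of_subset_of_card_le ?_ ?_
    · intro x hx
      obtain ⟨c, hc, rfl⟩ := Finset.mem_image.mp hx
      exact Finset.mem_Icc.mpr (W.fL_mem c hc)
    · rw [Finset.card_image_of_injOn W.fL_inj, W.cardL, Nat.card_Icc]
      omega
  have : t ∈ W.lam'.cells.image W.fL := by
    rw [himg]; exact Finset.mem_Icc.mpr ⟨h1, h2⟩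
  obtain ⟨c, hc, hct⟩ := Finset.mem_image.mp this
  exact ⟨c, hc, hct⟩

theorem afterwall_surj {t : ℕ} (h1 : r < t) (h2 : t ≤ r + s) :
    (∃ c ∈ W.lam'.cells \ W.nu.cells, W.fSk c = t) ∨ ∃ c ∈ W.lam''.cells, W.fR c = t := by
  set A := (W.lam'.cells \ W.nu.cells).image W.fSk
  set B := W.lam''.cells.image W.fR
  have hdisj : Disjoint A B := by
    rw [Finset.disjoint_left]
    rintro x hA hB
    obtain ⟨c, hc, rfl⟩ := Finset.mem_image.mp hA
    obtain ⟨c', hc', he⟩ := Finset.mem_image.mp hB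
    exact W.disj c hc c' hc' he.symm
  have himg : A ∪ B = Finset.Icc (r + 1) (r + s) := by
    refine Finset.eq_of_subset_of_card_le ?_ ?_
    · intro x hx
      rcases Finset.mem_union.mp hx with h | h
      · obtain ⟨c, hc, rfl⟩ := Finset.mem_image.mp h
        exact Finset.mem_Icc.mpr (W.fSk_mem c hc)
      · obtain ⟨c, hc, rfl⟩ := Finset.mem_image.mp h
        exact Finset.mem_Icc.mpr (W.fR_mem c hc)
    · rw [Finset.card_union_of_disjoint hdisj, Finset.card_image_of_injOn W.fSk_inj,
        Finset.card_image_of_injOn W.fR_inj, W.cardAfter, Nat.card_Icc]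
      omega
  have : t ∈ A ∪ B := by rw [himg]; exact Finset.mem_Icc.mpr ⟨by omega, h2⟩
  rcases Finset.mem_union.mp this with h | h
  · obtain ⟨c, hc, hct⟩ := Finset.mem_image.mp h
    exact Or.inl ⟨c, hc, hct⟩
  · obtain ⟨c, hc, hct⟩ := Finset.mem_image.mp h
    exact Or.inr ⟨c, hc, hct⟩

/-- the reconstructed path -/
noncomputable def oseq (W : TripleTableau r s) : ℕ → YoungDiagram × YoungDiagram :=
  fun t => (if t ≤ r then (W.stepL t).choose else (W.stepSk t).choose, (W.stepR t).choose)

theorem oseq1_le {t : ℕ} (ht : t ≤ r) :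
    (W.oseq t).1.cells = W.lam'.cells.filter (fun c => W.fL c ≤ t) := by
  simp only [oseq, if_pos ht]
  exact (W.stepL t).choose_spec

theorem lam'_filter_fL : W.lam'.cells.filter (fun c => W.fL c ≤ r) = W.lam'.cells :=
  Finset.filter_true_of_mem fun c hc => (W.fL_mem c hc).2

theorem lam'_filter_sk :
    W.lam'.cells.filter (fun c => c ∈ W.nu.cells ∨ r < W.fSk c) = W.lam'.cells := by
  refine Finset.filter_true_of_mem fun c hc => ?_
  by_cases hn : c ∈ W.nu.cells
  · exact Or.inl hn
  · exact Or.inr (by have := (W.fSk_mem c (Finset.mem_sdiff.mpr ⟨hc, hn⟩)).1; omega)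

theorem oseq1_ge {t : ℕ} (ht : r ≤ t) :
    (W.oseq t).1.cells = W.lam'.cells.filter (fun c => c ∈ W.nu.cells ∨ t < W.fSk c) := by
  by_cases ht' : t ≤ r
  · have htr : t = r := le_antisymm ht' ht
    subst htr
    rw [W.oseq1_le le_rfl, W.lam'_filter_fL, W.lam'_filter_sk]
  · simp only [oseq, if_neg ht']
    exact (W.stepSk t).choose_spec

theorem oseq2 (t : ℕ) : (W.oseq t).2.cells = W.lam''.cells.filter (fun c => W.fR c ≤ t) :=
  (W.stepR t).choose_spec

variable {Λ : YoungDiagram × YoungDiagram}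

/-- the walled tableau reconstructed from a triple tableau -/
noncomputable def toWalled (W : TripleTableau r s) (hnu : W.nu = Λ.1) (hl2 : W.lam'' = Λ.2) :
    WalledTableau r s Λ where
  seq := W.oseq
  init := by
    refine Prod.ext ?_ ?_
    · apply YoungDiagram.ext
      rw [W.oseq1_le (Nat.zero_le r), YoungDiagram.cells_bot]
      refine Finset.filter_false_of_mem fun c hc => ?_
      have := (W.fL_mem c hc).1
      omega
    · apply YoungDiagram.ext
      rw [W.oseq2 0, YoungDiagram.cells_bot]
      refine Finset.filter_false_of_mem fun c hc => ?_
      have := (W.fR_mem c hc).1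
      omega
  final := by
    refine Prod.ext ?_ ?_
    · apply YoungDiagram.ext
      rw [W.oseq1_ge (by omega), ← hnu]
      ext x
      simp only [Finset.mem_filter, YoungDiagram.mem_cells]
      constructor
      · rintro ⟨hx, hx' | hx'⟩
        · exact hx'
        · by_contra hn
          have := (W.fSk_mem x (Finset.mem_sdiff.mpr ⟨hx, hn⟩)).2
          omega
      · intro hx
        exact ⟨W.sub hx, Or.inl hx⟩
    · apply YoungDiagram.ext
      rw [W.oseq2 (r + s), ← hl2]
      exact Finset.filter_true_of_mem fun c hc => (W.fR_mem c hc).2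
  stable := by
    intro t ht
    refine Prod.ext ?_ ?_
    · apply YoungDiagram.ext
      rw [W.oseq1_ge (by omega), W.oseq1_ge (by omega : r ≤ r + s)]
      refine Finset.filter_congr fun c hc => ?_
      by_cases hn : c ∈ W.nu.cells
      · simp [hn]
      · have := (W.fSk_mem c (Finset.mem_sdiff.mpr ⟨hc, hn⟩)).2
        constructor
        · rintro (h | h)
          · exact Or.inl h
          · omega
        · rintro (h | h)
          · exact Or.inl h
          · exact Or.inr (by omega)
    · apply YoungDiagram.ext
      rw [W.oseq2 t, W.oseq2 (r + s)]
      refine Finset.filter_congr fun c hc => ?_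
      have := (W.fR_mem c hc).2
      constructor <;> intro h <;> omega
  left := by
    intro t h1 h2
    constructor
    · apply YoungDiagram.ext
      rw [W.oseq2 t, W.oseq2 (t - 1)]
      refine Finset.filter_congr fun c hc => ?_
      have := (W.fR_mem c hc).1
      constructor <;> intro h <;> omega
    · obtain ⟨c, hcl, hfc⟩ := W.fL_surj h1 h2
      refine ⟨c, ?_, ?_⟩
      · show c ∉ (W.oseq (t - 1)).1.cells
        rw [W.oseq1_le (by omega)]
        simp only [Finset.mem_filter, not_and]
        intro _
        omega
      · rw [W.oseq1_le h2, W.oseq1_le (by omega : t - 1 ≤ r)]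
        ext x
        simp only [Finset.mem_insert, Finset.mem_filter]
        constructor
        · rintro ⟨hx, hx'⟩
          by_cases he : W.fL x = t
          · exact Or.inl (W.fL_inj hx hcl (by rw [he, hfc]))
          · exact Or.inr ⟨hx, by omega⟩
        · rintro (rfl | ⟨hx, hx'⟩)
          · exact ⟨hcl, by omega⟩
          · exact ⟨hx, by omega⟩
  right := by
    intro t h1 h2
    rcases W.afterwall_surj h1 h2 with ⟨c, hc, hfc⟩ | ⟨c, hc, hfc⟩
    · -- removal from the left diagram
      refine Or.inr ⟨?_, c, ?_, ?_⟩
      · apply YoungDiagram.ext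
        rw [W.oseq2 t, W.oseq2 (t - 1)]
        refine Finset.filter_congr fun x hx => ?_
        have hne : W.fR x ≠ t := fun h => W.disj c hc x hx (by rw [hfc, h])
        constructor <;> intro h <;> omega
      · show c ∈ (W.oseq (t - 1)).1.cells
        rw [W.oseq1_ge (by omega)]
        rw [Finset.mem_sdiff] at hc
        exact Finset.mem_filter.mpr ⟨hc.1, Or.inr (by omega)⟩
      · rw [W.oseq1_ge (by omega : r ≤ t), W.oseq1_ge (by omega : r ≤ t - 1)]
        rw [Finset.mem_sdiff] at hc
        ext x
        simp only [Finset.mem_erase, Finset.mem_filter]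
        constructor
        · rintro ⟨hx, hx' | hx'⟩
          · exact ⟨fun h => hc.2 (h ▸ hx'), hx, Or.inl hx'⟩
          · refine ⟨fun h => by rw [h] at hx'; omega, hx, Or.inr (by omega)⟩
        · rintro ⟨hne, hx, hx' | hx'⟩
          · exact ⟨hx, Or.inl hx'⟩
          · by_cases hn : x ∈ W.nu.cells
            · exact ⟨hx, Or.inl hn⟩
            · have hne2 : W.fSk x ≠ t := fun h =>
                hne (W.fSk_inj (Finset.mem_sdiff.mpr ⟨hx, hn⟩)
                  (Finset.mem_sdiff.mpr ⟨hc.1, hc.2⟩) (by rw [h, hfc]))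
              exact ⟨hx, Or.inr (by omega)⟩
    · -- addition to the right diagram
      refine Or.inl ⟨?_, c, ?_, ?_⟩
      · apply YoungDiagram.ext
        rw [W.oseq1_ge (by omega : r ≤ t), W.oseq1_ge (by omega : r ≤ t - 1)]
        refine Finset.filter_congr fun x hx => ?_
        by_cases hn : x ∈ W.nu.cells
        · simp [hn]
        · have hne : W.fSk x ≠ t := fun h =>
            W.disj x (Finset.mem_sdiff.mpr ⟨hx, hn⟩) c hc (by rw [h, hfc])
          constructor
          · rintro (h | h)
            · exact Or.inl h
            · exact Or.inr (by omega)
          · rintro (h | h)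
            · exact Or.inl h
            · exact Or.inr (by omega)
      · show c ∉ (W.oseq (t - 1)).2.cells
        rw [W.oseq2 (t - 1)]
        simp only [Finset.mem_filter, not_and]
        intro _
        omega
      · rw [W.oseq2 t, W.oseq2 (t - 1)]
        ext x
        simp only [Finset.mem_insert, Finset.mem_filter]
        constructor
        · rintro ⟨hx, hx'⟩
          by_cases he : W.fR x = t
          · exact Or.inl (W.fR_inj hx hc (by rw [he, hfc]))
          · exact Or.inr ⟨hx, by omega⟩
        · rintro (rfl | ⟨hx, hx'⟩)
          · exact ⟨hc, by omega⟩
          · exact ⟨hx, by omega⟩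

end TripleTableau

section Equiv

variable {r s : ℕ} {Λ : YoungDiagram × YoungDiagram}

theorem left_inv_aux (T : WalledTableau r s Λ) :
    (T.toTriple.toWalled rfl rfl : WalledTableau r s Λ) = T := by
  apply WalledTableau.ext'
  funext t
  show T.toTriple.oseq t = T.seq t
  refine Prod.ext ?_ ?_
  · apply YoungDiagram.ext
    by_cases ht : t ≤ r
    · rw [T.toTriple.oseq1_le ht, T.C1 ht]
      refine Finset.filter_congr fun c hc => ?_
      simp only [WalledTableau.toTriple]
      rw [if_pos (show c ∈ (T.seq r).1 from hc)]
    · rw [T.toTriple.oseq1_ge (by omega), T.C2 (by omega : r ≤ t)]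
      refine Finset.filter_congr fun c hc => ?_
      simp only [WalledTableau.toTriple]
      by_cases hn : c ∈ Λ.1.cells
      · simp [hn]
      · rw [if_pos (show c ∈ (T.seq r).1.cells \ Λ.1.cells from Finset.mem_sdiff.mpr ⟨hc, hn⟩)]
  · apply YoungDiagram.ext
    rw [T.toTriple.oseq2 t, T.C3 t]
    refine Finset.filter_congr fun c hc => ?_
    simp only [WalledTableau.toTriple]
    rw [if_pos (show c ∈ Λ.2 from hc)]

theorem right_inv_aux (W : TripleTableau r s) (hnu : W.nu = Λ.1) (hl2 : W.lam'' = Λ.2) :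
    (W.toWalled hnu hl2).toTriple = W := by
  set T := W.toWalled hnu hl2 with hT
  have hseq : T.seq = W.oseq := rfl
  have hlam : (T.seq r).1.cells = W.lam'.cells := by
    rw [hseq, W.oseq1_le le_rfl, W.lam'_filter_fL]
  refine TripleTableau.ext' ?_ hnu.symm hl2.symm ?_ ?_ ?_
  · exact YoungDiagram.ext hlam
  · funext c
    show (if c ∈ (T.seq r).1 then T.aL c else 0) = W.fL c
    by_cases hc : c ∈ W.lam'.cells
    · rw [if_pos (by rw [← YoungDiagram.mem_cells, hlam]; exact hc)]
      have hmem : c ∈ (T.seq (W.fL c)).1 := by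
        show c ∈ (T.seq (W.fL c)).1.cells
        rw [hseq, W.oseq1_le (W.fL_mem c hc).2]
        exact Finset.mem_filter.mpr ⟨hc, le_rfl⟩
      refine le_antisymm (Nat.sInf_le hmem) ?_
      refine le_csInf ⟨_, hmem⟩ fun t htm => ?_
      by_cases ht : t ≤ r
      · have : c ∈ (T.seq t).1.cells := htm
        rw [hseq, W.oseq1_le ht] at this
        exact (Finset.mem_filter.mp this).2
      · exact (W.fL_mem c hc).2.trans (by omega)
    · rw [if_neg (by rw [← YoungDiagram.mem_cells, hlam]; exact hc), W.fL_junk c hc]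
  · funext c
    show (if c ∈ (T.seq r).1.cells \ Λ.1.cells then T.dSk c else 0) = W.fSk c
    rw [hlam, ← hnu]
    by_cases hc : c ∈ W.lam'.cells \ W.nu.cells
    · rw [if_pos hc]
      have h1 := W.fSk_mem c hc
      have hmem : W.fSk c ∈ {t : ℕ | r < t ∧ c ∉ (T.seq t).1} := by
        refine ⟨by omega, ?_⟩
        show c ∉ (T.seq (W.fSk c)).1.cells
        rw [hseq, W.oseq1_ge (by omega)]
        rw [Finset.mem_sdiff] at hc
        simp only [Finset.mem_filter, not_and, not_or]
        intro _
        exact ⟨hc.2, by omega⟩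
      refine le_antisymm (Nat.sInf_le hmem) ?_
      refine le_csInf ⟨_, hmem⟩ fun t htm => ?_
      obtain ⟨htr, htm⟩ := htm
      have : c ∉ (T.seq t).1.cells := htm
      rw [hseq, W.oseq1_ge (by omega)] at this
      simp only [Finset.mem_filter, not_and, not_or] at this
      rw [Finset.mem_sdiff] at hc
      have h2 := (this hc.1).2
      omega
    · rw [if_neg hc, W.fSk_junk c hc]
  · funext c
    show (if c ∈ Λ.2 then T.aR c else 0) = W.fR c
    by_cases hc : c ∈ W.lam''.cells
    · rw [if_pos (by rw [← hl2]; exact hc)]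
      have h1 := W.fR_mem c hc
      have hmem : c ∈ (T.seq (W.fR c)).2 := by
        show c ∈ (T.seq (W.fR c)).2.cells
        rw [hseq, W.oseq2]
        exact Finset.mem_filter.mpr ⟨hc, le_rfl⟩
      refine le_antisymm (Nat.sInf_le hmem) ?_
      refine le_csInf ⟨_, hmem⟩ fun t htm => ?_
      have : c ∈ (T.seq t).2.cells := htm
      rw [hseq, W.oseq2] at this
      exact (Finset.mem_filter.mp this).2
    · rw [if_neg (by rw [← hl2]; exact hc), W.fR_junk c hc]

end Equiv

/-- standard walled Λ-tableaux are in bijection with standard triple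
tableaux [λ'(T), ν(T), λ''(T)] with ν = Λ_L and λ'' = Λ_R, the bijection sending a
path T to the triple tableau whose first diagram is the left diagram after r steps,
whose fillings record the time at which each cell was added to the left diagram,
removed from the left diagram, or added to the right diagram, respectively. -/
theorem walled_tableaux_equiv_triple_tableaux (r s : ℕ)
    (Λ : YoungDiagram × YoungDiagram) :
    ∃ e : WalledTableau r s Λ ≃
        {W : TripleTableau r s // W.nu = Λ.1 ∧ W.lam'' = Λ.2},
      ∀ T : WalledTableau r s Λ,
        ((e T : TripleTableau r s).lam' = (T.seq r).1) ∧
        (∀ c ∈ (T.seq r).1.cells,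
          (e T : TripleTableau r s).fL c = sInf {t : ℕ | c ∈ (T.seq t).1}) ∧
        (∀ c ∈ (T.seq r).1.cells \ Λ.1.cells,
          (e T : TripleTableau r s).fSk c = sInf {t : ℕ | r < t ∧ c ∉ (T.seq t).1}) ∧
        (∀ c ∈ Λ.2.cells,
          (e T : TripleTableau r s).fR c = sInf {t : ℕ | c ∈ (T.seq t).2}) := by
  refine ⟨{ toFun := fun T => ⟨T.toTriple, rfl, rfl⟩
            invFun := fun W => W.1.toWalled W.2.1 W.2.2
            left_inv := fun T => left_inv_aux T
            right_inv := fun W => Subtype.ext (right_inv_aux W.1 W.2.1 W.2.2) }, ?_⟩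
  intro T
  refine ⟨rfl, ?_, ?_, ?_⟩
  · intro c hc
    show (if c ∈ (T.seq r).1 then T.aL c else 0) = _
    rw [if_pos (show c ∈ (T.seq r).1 from hc)]
    rfl
  · intro c hc
    show (if c ∈ (T.seq r).1.cells \ Λ.1.cells then T.dSk c else 0) = _
    rw [if_pos hc]
    rfl
  · intro c hc
    show (if c ∈ Λ.2 then T.aR c else 0) = _
    rw [if_pos (show c ∈ Λ.2 from hc)]
    rfl
end
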